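/- Let r, M be positive integers, F_D ∈ ℝ^{r×r}, H_D ∈ ℝ^{1×r}, G_D ∈ ℝ^{r×1}, let Σ_0 ∈ ℝ^{r×r} be symmetric positive semidefinite, let D ∈ ℝ^{M×M} be diagonal with nonnegative diagonal entries d_1, …, d_M, and let σ² > 0. Define F̄ = I_M ⊗ F_D, H̄ = D^{1/2}(I_M ⊗ H_D), Q = I_M ⊗ (G_D G_Dᵀ), and the Kalman filter covariance recursion: P_1 = I_M ⊗ (F_D Σ_0 F_Dᵀ + G_D G_Dᵀ), and for j ≥ 1, E_j = H̄ P_j H̄ᵀ + σ² I_M and P_{j+1} = F̄ (P_j − P_j H̄ᵀ E_j^{−1} H̄ P_j) F̄ᵀ + Q. Then for every j ≥ 1: (i) P_j is symmetric positive semidefinite and block diagonal with M diagonal blocks P_{j,1}, …, P_{j,M} ∈ ℝ^{r×r} (each symmetric positive semidefinite); and (ii) E_j is a diagonal matrix whose i-th diagonal entry equals d_i · H_D P_{j,i} H_Dᵀ + σ² ≥ σ² > 0, so E_j is positive definite and invertible. -/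

import Mathlib

open Matrix
open scoped Kronecker

section Aux
variable {M r : ℕ}

def BD (B : Fin M → Matrix (Fin r) (Fin r) ℝ) : Matrix (Fin M × Fin r) (Fin M × Fin r) ℝ :=
  Matrix.of fun p q => if p.1 = q.1 then B p.1 p.2 q.2 else 0

@[simp] lemma BD_apply (B : Fin M → Matrix (Fin r) (Fin r) ℝ) (p q) :
    BD B p q = if p.1 = q.1 then B p.1 p.2 q.2 else 0 := rfl

lemma BD_mul (B C : Fin M → Matrix (Fin r) (Fin r) ℝ) :
    BD B * BD C = BD (fun i => B i * C i) := by
  ext ⟨i, a⟩ ⟨j, b⟩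
  simp only [Matrix.mul_apply, BD_apply, Fintype.sum_prod_type, ite_mul, zero_mul,
    mul_ite, mul_zero]
  by_cases h : i = j
  · subst h; simp [Matrix.mul_apply]
  · simp [h, Matrix.mul_apply]

lemma BD_sub (B C : Fin M → Matrix (Fin r) (Fin r) ℝ) :
    BD B - BD C = BD (fun i => B i - C i) := by
  ext ⟨i, a⟩ ⟨j, b⟩
  by_cases h : i = j <;> simp [h]

lemma BD_add (B C : Fin M → Matrix (Fin r) (Fin r) ℝ) :
    BD B + BD C = BD (fun i => B i + C i) := by
  ext ⟨i, a⟩ ⟨j, b⟩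
  by_cases h : i = j <;> simp [h]

lemma BD_transpose (B : Fin M → Matrix (Fin r) (Fin r) ℝ) :
    (BD B)ᵀ = BD (fun i => (B i)ᵀ) := by
  ext ⟨i, a⟩ ⟨j, b⟩
  by_cases h : i = j
  · subst h; simp
  · simp [Matrix.transpose_apply, h, Ne.symm h]

lemma one_kron_eq_BD (A : Matrix (Fin r) (Fin r) ℝ) :
    ((1 : Matrix (Fin M) (Fin M) ℝ) ⊗ₖ A) = BD (fun _ => A) := by
  ext ⟨i, a⟩ ⟨j, b⟩
  simp [Matrix.kroneckerMap_apply, Matrix.one_apply, ite_mul, zero_mul]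

end Aux

section Aux2
variable {M r : ℕ}

lemma BD_mulVec (B : Fin M → Matrix (Fin r) (Fin r) ℝ) (x : Fin M × Fin r → ℝ) (p) :
    (BD B *ᵥ x) p = (B p.1 *ᵥ fun b => x (p.1, b)) p.2 := by
  obtain ⟨i, a⟩ := p
  simp [Matrix.mulVec, dotProduct, Fintype.sum_prod_type, ite_mul, zero_mul,
    Finset.sum_ite_eq]

lemma BD_posSemidef (B : Fin M → Matrix (Fin r) (Fin r) ℝ) (h : ∀ i, (B i).PosSemidef) :
    (BD B).PosSemidef := by
  refine Matrix.PosSemidef.of_dotProduct_mulVec_nonneg ?_ ?_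
  · show (BD B)ᴴ = BD B
    rw [Matrix.conjTranspose_eq_transpose_of_trivial, BD_transpose]
    have : (fun i => (B i)ᵀ) = B := funext fun i => by
      rw [← Matrix.conjTranspose_eq_transpose_of_trivial]; exact (h i).1
    rw [this]
  · intro x
    have hx : star x = x := by funext p; simp
    rw [hx]
    have key : dotProduct x (BD B *ᵥ x)
        = ∑ i, (fun a => x (i, a)) ⬝ᵥ (B i *ᵥ fun b => x (i, b)) := by
      simp only [dotProduct, Fintype.sum_prod_type, BD_mulVec]
    rw [key]
    refine Finset.sum_nonneg fun i _ => ?_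
    have := (h i).dotProduct_mulVec_nonneg (fun a => x (i, a))
    simpa using this

noncomputable def Hm (d : Fin M → ℝ) (H : Matrix (Fin 1) (Fin r) ℝ) : Matrix (Fin M) (Fin M × Fin r) ℝ :=
  Matrix.of fun i q => if i = q.1 then Real.sqrt (d i) * H 0 q.2 else 0

lemma Hbar_eq (d : Fin M → ℝ) (H : Matrix (Fin 1) (Fin r) ℝ) :
    Matrix.diagonal (fun i => Real.sqrt (d i)) *
      Matrix.reindex (Equiv.prodUnique (Fin M) (Fin 1)) (Equiv.refl (Fin M × Fin r))
        ((1 : Matrix (Fin M) (Fin M) ℝ) ⊗ₖ H) = Hm d H := by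
  ext i ⟨j, b⟩
  simp [Hm, Matrix.one_apply, mul_ite, mul_zero, ite_mul, zero_mul]

lemma Hm_BD_Hm (d : Fin M → ℝ) (hd : ∀ i, 0 ≤ d i) (H : Matrix (Fin 1) (Fin r) ℝ)
    (B : Fin M → Matrix (Fin r) (Fin r) ℝ) :
    Hm d H * BD B * (Hm d H)ᵀ
      = Matrix.diagonal (fun i => d i * (H * B i * Hᵀ) 0 0) := by
  ext i j
  simp only [Matrix.mul_apply, Fintype.sum_prod_type, Hm, BD_apply, Matrix.of_apply,
    Matrix.transpose_apply, ite_mul, zero_mul, mul_ite, mul_zero, Finset.sum_ite_eq,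
    Finset.sum_ite_eq', Finset.mem_univ, if_true, Matrix.diagonal_apply]
  by_cases hij : i = j
  · subst hij
    simp only [if_true]
    simp only [Finset.sum_ite_irrel, Finset.sum_const_zero, Finset.sum_ite_eq,
      Finset.sum_ite_eq', Finset.mem_univ, if_true]
    have hs : Real.sqrt (d i) * Real.sqrt (d i) = d i := Real.mul_self_sqrt (hd i)
    rw [Finset.mul_sum]
    refine Finset.sum_congr rfl fun x _ => ?_
    have h2 : (∑ x_1, Real.sqrt (d i) * H 0 x_1 * B i x_1 x)
        = Real.sqrt (d i) * ∑ x_1, H 0 x_1 * B i x_1 x := by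
      rw [Finset.mul_sum]; simp [mul_assoc]
    rw [h2]
    linear_combination ((∑ x_1 : Fin r, H 0 x_1 * B i x_1 x) * H 0 x) * hs
  · simp [hij]

end Aux2

section Aux3
variable {M r : ℕ}

lemma Hm_diag_Hm (d : Fin M → ℝ) (hd : ∀ i, 0 ≤ d i) (H : Matrix (Fin 1) (Fin r) ℝ)
    (w : Fin M → ℝ) :
    (Hm d H)ᵀ * Matrix.diagonal w * Hm d H
      = BD (fun i => (d i * w i) • (Hᵀ * H)) := by
  ext ⟨i, a⟩ ⟨j, b⟩
  simp only [Matrix.mul_apply, Hm, Matrix.of_apply, Matrix.transpose_apply,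
    Matrix.diagonal_apply, BD_apply, Matrix.smul_apply, smul_eq_mul,
    ite_mul, zero_mul, mul_ite, mul_zero, Finset.sum_ite_irrel, Finset.sum_const_zero,
    Finset.sum_ite_eq, Finset.sum_ite_eq', Finset.mem_univ, if_true]
  by_cases hij : i = j
  · subst hij
    simp only [if_true]
    have hs : Real.sqrt (d i) * Real.sqrt (d i) = d i := Real.mul_self_sqrt (hd i)
    rw [Fin.sum_univ_one]
    linear_combination (H 0 a * w i * H 0 b) * hs
  · simp [hij, Ne.symm hij]

section SqrtAux
open scoped MatrixOrder

noncomputable def Matrix.PosSemidef.sqrt {A : Matrix (Fin r) (Fin r) ℝ} (_hA : A.PosSemidef) :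
    Matrix (Fin r) (Fin r) ℝ := CFC.sqrt A

lemma Matrix.PosSemidef.sqrt_mul_self {A : Matrix (Fin r) (Fin r) ℝ} (hA : A.PosSemidef) :
    hA.sqrt * hA.sqrt = A := CFC.sqrt_mul_sqrt_self A hA.nonneg

lemma Matrix.PosSemidef.posSemidef_sqrt {A : Matrix (Fin r) (Fin r) ℝ} (hA : A.PosSemidef) :
    hA.sqrt.PosSemidef := (CFC.sqrt_nonneg A).posSemidef

end SqrtAux

/-- quadratic form via sqrt -/
lemma quadform_sqrt {A : Matrix (Fin r) (Fin r) ℝ} (hA : A.PosSemidef)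
    (y z : Fin r → ℝ) :
    y ⬝ᵥ (A *ᵥ z) = (hA.sqrt *ᵥ y) ⬝ᵥ (hA.sqrt *ᵥ z) := by
  have hs : hA.sqrt * hA.sqrt = A := hA.sqrt_mul_self
  have hherm : (hA.sqrt)ᵀ = hA.sqrt := by
    rw [← Matrix.conjTranspose_eq_transpose_of_trivial]
    exact hA.posSemidef_sqrt.1
  calc y ⬝ᵥ (A *ᵥ z) = y ⬝ᵥ (hA.sqrt *ᵥ (hA.sqrt *ᵥ z)) := by
        rw [Matrix.mulVec_mulVec, hs]
    _ = (y ᵥ* hA.sqrt) ⬝ᵥ (hA.sqrt *ᵥ z) := by rw [Matrix.dotProduct_mulVec]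
    _ = (hA.sqrt *ᵥ y) ⬝ᵥ (hA.sqrt *ᵥ z) := by
        rw [← Matrix.mulVec_transpose, hherm]

lemma entry00 (H : Matrix (Fin 1) (Fin r) ℝ) (A : Matrix (Fin r) (Fin r) ℝ) :
    (H * A * Hᵀ) 0 0 = (fun a => H 0 a) ⬝ᵥ (A *ᵥ fun a => H 0 a) := by
  simp only [Matrix.mul_apply, Matrix.transpose_apply, dotProduct,
    Matrix.mulVec, Finset.sum_mul, Finset.mul_sum]
  rw [Finset.sum_comm]
  refine Finset.sum_congr rfl fun c _ => Finset.sum_congr rfl fun a _ => by ring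

end Aux3

section Aux4
variable {r : ℕ}

lemma update_posSemidef {B : Matrix (Fin r) (Fin r) ℝ} (hB : B.PosSemidef)
    (H : Matrix (Fin 1) (Fin r) ℝ) (s σ2 : ℝ) (hs : 0 ≤ s) (hσ : 0 < σ2) :
    (B - ((s * (H * B * Hᵀ) 0 0 + σ2)⁻¹ * s) • (B * (Hᵀ * H) * B)).PosSemidef := by
  set h : Fin r → ℝ := fun a => H 0 a with hh
  set v : Fin r → ℝ := hB.sqrt *ᵥ h with hv
  have ht : (H * B * Hᵀ) 0 0 = v ⬝ᵥ v := by
    rw [entry00, quadform_sqrt hB]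
  have hv0 : 0 ≤ v ⬝ᵥ v := Finset.sum_nonneg fun i _ => mul_self_nonneg _
  set e : ℝ := s * (H * B * Hᵀ) 0 0 + σ2 with he_def
  have he : 0 < e := by
    rw [he_def, ht]; nlinarith
  have hBt : Bᵀ = B := by
    rw [← Matrix.conjTranspose_eq_transpose_of_trivial]; exact hB.1
  refine Matrix.PosSemidef.of_dotProduct_mulVec_nonneg ?_ ?_
  · show _ᴴ = _
    rw [Matrix.conjTranspose_eq_transpose_of_trivial]
    simp only [Matrix.transpose_sub, Matrix.transpose_smul, Matrix.transpose_mul,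
      Matrix.transpose_transpose, hBt, Matrix.mul_assoc]
  · intro x
    have hx : star x = x := by funext p; simp
    rw [hx]
    set u : Fin r → ℝ := hB.sqrt *ᵥ x with hu
    have hu0 : 0 ≤ u ⬝ᵥ u := Finset.sum_nonneg fun i _ => mul_self_nonneg _
    have hq : x ⬝ᵥ (B *ᵥ x) = u ⬝ᵥ u := quadform_sqrt hB x x
    have hmid : ∀ y : Fin r → ℝ, (Hᵀ * H) *ᵥ y = (h ⬝ᵥ y) • h := by
      intro y; funext a
      simp only [Matrix.mulVec, dotProduct, Matrix.mul_apply,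
        Matrix.transpose_apply, Fin.sum_univ_one, Pi.smul_apply, smul_eq_mul,
        Finset.sum_mul, Finset.mul_sum]
      exact Finset.sum_congr rfl fun b _ => by rw [hh]; ring
    have hNx : x ⬝ᵥ ((B * (Hᵀ * H) * B) *ᵥ x) = (v ⬝ᵥ u) ^ 2 := by
      rw [← Matrix.mulVec_mulVec, ← Matrix.mulVec_mulVec, hmid, Matrix.mulVec_smul,
        dotProduct_smul, smul_eq_mul]
      have h1 : h ⬝ᵥ (B *ᵥ x) = v ⬝ᵥ u := quadform_sqrt hB h x
      have h2 : x ⬝ᵥ (B *ᵥ h) = u ⬝ᵥ v := quadform_sqrt hB x h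
      rw [h1, h2, dotProduct_comm u v]; ring
    have hCS : (v ⬝ᵥ u) ^ 2 ≤ (v ⬝ᵥ v) * (u ⬝ᵥ u) := by
      have := Finset.sum_mul_sq_le_sq_mul_sq Finset.univ v u
      simpa [dotProduct, sq] using this
    rw [Matrix.sub_mulVec, dotProduct_sub, Matrix.smul_mulVec,
      dotProduct_smul, smul_eq_mul, hq, hNx]
    have h1 : s * (v ⬝ᵥ u) ^ 2 ≤ e * (u ⬝ᵥ u) := by
      rw [he_def, ht]; nlinarith
    have h2 : e⁻¹ * s * (v ⬝ᵥ u) ^ 2 ≤ u ⬝ᵥ u := by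
      rw [mul_assoc, inv_mul_le_iff₀ he]
      exact h1
    linarith

end Aux4

/-- Structural claim in the proof of Theorem 1: for the transformed Kalman filter covariance
recursion with `F̄ = I_M ⊗ F_D`, `H̄ = D^{1/2}(I_M ⊗ H_D)`, `Q = I_M ⊗ (G_D G_Dᵀ)`,
`P₁ = I_M ⊗ (F_D Σ₀ F_Dᵀ + G_D G_Dᵀ)`, `E_j = H̄ P_j H̄ᵀ + σ² I_M` and
`P_{j+1} = F̄ (P_j − P_j H̄ᵀ E_j⁻¹ H̄ P_j) F̄ᵀ + Q`, every `P_j` is symmetric positive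
semidefinite and block diagonal with `M` symmetric positive semidefinite `r×r` blocks
`P_{j,1}, …, P_{j,M}`, and every `E_j` is diagonal with `i`-th diagonal entry
`d_i · H_D P_{j,i} H_Dᵀ + σ² ≥ σ² > 0`, hence positive definite and invertible. -/
theorem kalman_covariances_block_diagonal (r M : ℕ) (hr : 0 < r) (hM : 0 < M)
    (F_D : Matrix (Fin r) (Fin r) ℝ)
    (H_D : Matrix (Fin 1) (Fin r) ℝ)
    (G_D : Matrix (Fin r) (Fin 1) ℝ)
    (Sigma0 : Matrix (Fin r) (Fin r) ℝ) (hSigma0 : Sigma0.PosSemidef)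
    (d : Fin M → ℝ) (hd : ∀ i, 0 ≤ d i)
    (σ2 : ℝ) (hσ2 : 0 < σ2)
    (Fbar : Matrix (Fin M × Fin r) (Fin M × Fin r) ℝ)
    (hF : Fbar = (1 : Matrix (Fin M) (Fin M) ℝ) ⊗ₖ F_D)
    (Hbar : Matrix (Fin M) (Fin M × Fin r) ℝ)
    (hH : Hbar = Matrix.diagonal (fun i => Real.sqrt (d i)) *
      Matrix.reindex (Equiv.prodUnique (Fin M) (Fin 1)) (Equiv.refl (Fin M × Fin r))
        ((1 : Matrix (Fin M) (Fin M) ℝ) ⊗ₖ H_D))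
    (Q : Matrix (Fin M × Fin r) (Fin M × Fin r) ℝ)
    (hQ : Q = (1 : Matrix (Fin M) (Fin M) ℝ) ⊗ₖ (G_D * G_Dᵀ))
    (P : ℕ → Matrix (Fin M × Fin r) (Fin M × Fin r) ℝ)
    (E : ℕ → Matrix (Fin M) (Fin M) ℝ)
    (hP1 : P 1 = (1 : Matrix (Fin M) (Fin M) ℝ) ⊗ₖ (F_D * Sigma0 * F_Dᵀ + G_D * G_Dᵀ))
    (hE : ∀ j, 1 ≤ j → E j = Hbar * P j * Hbarᵀ + σ2 • (1 : Matrix (Fin M) (Fin M) ℝ))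
    (hPsucc : ∀ j, 1 ≤ j →
      P (j + 1) = Fbar * (P j - P j * Hbarᵀ * (E j)⁻¹ * Hbar * P j) * Fbarᵀ + Q) :
    ∀ j, 1 ≤ j →
      (P j).PosSemidef ∧
      ∃ B : Fin M → Matrix (Fin r) (Fin r) ℝ,
        (∀ i, (B i).PosSemidef) ∧
        (∀ p q : Fin M × Fin r, P j p q = if p.1 = q.1 then B p.1 p.2 q.2 else 0) ∧
        E j = Matrix.diagonal (fun i => d i * (H_D * B i * H_Dᵀ) 0 0 + σ2) ∧
        (∀ i, σ2 ≤ d i * (H_D * B i * H_Dᵀ) 0 0 + σ2) ∧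
        (E j).PosDef ∧ IsUnit (E j).det := by
  have hHbar : Hbar = Hm d H_D := by rw [hH, Hbar_eq]
  have hFbar : Fbar = BD (fun _ => F_D) := by rw [hF, one_kron_eq_BD]
  have hQbar : Q = BD (fun _ => G_D * G_Dᵀ) := by rw [hQ, one_kron_eq_BD]
  have hFt : F_Dᵀ = F_Dᴴ := (Matrix.conjTranspose_eq_transpose_of_trivial _).symm
  have hGt : G_Dᵀ = G_Dᴴ := (Matrix.conjTranspose_eq_transpose_of_trivial _).symm
  have hGG : (G_D * G_Dᵀ).PosSemidef := by
    rw [hGt]; exact Matrix.posSemidef_self_mul_conjTranspose G_D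
  have ht0 : ∀ A : Matrix (Fin r) (Fin r) ℝ, A.PosSemidef →
      0 ≤ (H_D * A * H_Dᵀ) 0 0 := by
    intro A hA
    rw [entry00]
    simpa using hA.dotProduct_mulVec_nonneg (fun a => H_D 0 a)
  -- one-step E computation
  have hσone : σ2 • (1 : Matrix (Fin M) (Fin M) ℝ)
      = Matrix.diagonal (fun _ => σ2) := by
    ext i j
    by_cases h : i = j <;> simp [Matrix.diagonal_apply, Matrix.one_apply, h]
  have hEdiag : ∀ j, 1 ≤ j → ∀ B : Fin M → Matrix (Fin r) (Fin r) ℝ, P j = BD B →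
      E j = Matrix.diagonal (fun i => d i * (H_D * B i * H_Dᵀ) 0 0 + σ2) := by
    intro j hj B hPB
    rw [hE j hj, hPB, hHbar, Hm_BD_Hm d hd, hσone, Matrix.diagonal_add]
  -- key invariant
  have key : ∀ j, 1 ≤ j → ∃ B : Fin M → Matrix (Fin r) (Fin r) ℝ,
      (∀ i, (B i).PosSemidef) ∧ P j = BD B := by
    intro j hj
    induction j, hj using Nat.le_induction with
    | base =>
      refine ⟨fun _ => F_D * Sigma0 * F_Dᵀ + G_D * G_Dᵀ, fun i => ?_,
        by rw [hP1, one_kron_eq_BD]⟩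
      refine Matrix.PosSemidef.add ?_ hGG
      rw [hFt]
      exact hSigma0.mul_mul_conjTranspose_same F_D
    | succ j hj ih =>
      obtain ⟨B, hBpsd, hPB⟩ := ih
      set e : Fin M → ℝ := fun i => d i * (H_D * B i * H_Dᵀ) 0 0 + σ2 with he_def
      have hepos : ∀ i, 0 < e i := by
        intro i
        have := ht0 (B i) (hBpsd i)
        have := mul_nonneg (hd i) this
        simp only [he_def]
        linarith
      have hEj : E j = Matrix.diagonal e := hEdiag j hj B hPB
      have hEinv : (E j)⁻¹ = Matrix.diagonal (fun i => (e i)⁻¹) := by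
        rw [hEj]
        apply Matrix.inv_eq_right_inv
        rw [Matrix.diagonal_mul_diagonal,
          show (fun i => e i * (e i)⁻¹) = fun _ => (1 : ℝ) from
            funext fun i => mul_inv_cancel₀ (hepos i).ne', Matrix.diagonal_one]
      have hsand : Hbarᵀ * (E j)⁻¹ * Hbar
          = BD (fun i => (d i * (e i)⁻¹) • (H_Dᵀ * H_D)) := by
        rw [hHbar, hEinv, Hm_diag_Hm d hd]
      refine ⟨fun i => F_D * (B i - B i * ((d i * (e i)⁻¹) • (H_Dᵀ * H_D)) * B i) * F_Dᵀ
        + G_D * G_Dᵀ, fun i => ?_, ?_⟩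
      · refine Matrix.PosSemidef.add ?_ hGG
        have hX : (B i - B i * ((d i * (e i)⁻¹) • (H_Dᵀ * H_D)) * B i).PosSemidef := by
          have h1 : B i * ((d i * (e i)⁻¹) • (H_Dᵀ * H_D)) * B i
              = ((e i)⁻¹ * d i) • (B i * (H_Dᵀ * H_D) * B i) := by
            rw [mul_smul_comm, Matrix.smul_mul, mul_comm (d i)]
          rw [h1]
          have := update_posSemidef (hBpsd i) H_D (d i) σ2 (hd i) hσ2
          simpa [he_def] using this
        rw [hFt]
        exact hX.mul_mul_conjTranspose_same F_D
      · rw [hPsucc j hj, hFbar, hQbar]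
        have hassoc : P j * Hbarᵀ * (E j)⁻¹ * Hbar * P j
            = P j * (Hbarᵀ * (E j)⁻¹ * Hbar) * P j := by
          simp only [Matrix.mul_assoc]
        rw [hassoc, hsand, hPB, BD_mul, BD_mul, BD_sub, BD_mul, BD_transpose, BD_mul, BD_add]
  -- conclusion
  intro j hj
  obtain ⟨B, hBpsd, hPB⟩ := key j hj
  have hPpsd : (P j).PosSemidef := hPB ▸ BD_posSemidef B hBpsd
  have hEj := hEdiag j hj B hPB
  have hle : ∀ i, σ2 ≤ d i * (H_D * B i * H_Dᵀ) 0 0 + σ2 := by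
    intro i
    have := mul_nonneg (hd i) (ht0 (B i) (hBpsd i))
    linarith
  have hEpd : (E j).PosDef := by
    rw [hEj]
    exact Matrix.PosDef.diagonal fun i => lt_of_lt_of_le hσ2 (hle i)
  exact ⟨hPpsd, B, hBpsd, fun p q => by rw [hPB]; rfl, hEj, hle, hEpd,
    hEpd.det_pos.ne'.isUnit⟩
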